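/- If μ(σ₀) < μ(0)(1 − σ₀/σ_L) for some 0 < σ₀ < σ_L, then there exist an integer k ≥ 1 and α with 0 < α ≤ kμ(0) for which the strict inequality σ_k(α) < σ_L·(1 − α/(kμ(0))) holds. -/

import Mathlib

open Complex Filter MeasureTheory Set Asymptotics Topology

noncomputable section

lemma abs_rpow_int_Ioi {q : ℝ} (hq : q < -1) :
    IntegrableOn (fun t : ℝ => |t| ^ q) (Ioi (1 : ℝ)) := by
  refine (integrableOn_Ioi_rpow_of_lt hq one_pos).congr_fun (fun x hx => ?_) measurableSet_Ioi
  rw [abs_of_pos (lt_trans one_pos hx)]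

lemma abs_rpow_int_Iio {q : ℝ} (hq : q < -1) :
    IntegrableOn (fun t : ℝ => |t| ^ q) (Iio (-1 : ℝ)) := by
  have h := ((Measure.measurePreserving_neg (volume : Measure ℝ)).integrableOn_comp_preimage
      (Homeomorph.neg ℝ).measurableEmbedding).mpr (abs_rpow_int_Ioi hq)
  have hset : (Neg.neg : ℝ → ℝ) ⁻¹' (Ioi 1) = Iio (-1 : ℝ) := by
    ext x; simp [lt_neg]
  rw [hset] at h
  refine h.congr_fun (fun x _ => ?_) measurableSet_Iio
  simp [Function.comp]

lemma abs_rpow_intAtFilter {q : ℝ} (hq : q < -1) :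
    IntegrableAtFilter (fun t : ℝ => |t| ^ q) (cocompact ℝ) := by
  refine ⟨Iio (-1) ∪ Ioi 1, ?_, (abs_rpow_int_Iio hq).union (abs_rpow_int_Ioi hq)⟩
  refine mem_cocompact.mpr ⟨Icc (-1) 1, isCompact_Icc, fun x hx => ?_⟩
  rw [mem_compl_iff, mem_Icc, not_and_or, not_le, not_le] at hx
  rcases hx with h | h
  · exact Or.inl h
  · exact Or.inr h

lemma key_integrable (f : ℂ → ℂ) (σ₀ m α : ℝ) (hσ₀ : 0 < σ₀) (hm : 0 ≤ m) (hα : m < α)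
    (hf : DifferentiableOn ℂ f {s : ℂ | 0 < s.re})
    (hO : (fun t : ℝ => f (σ₀ + t * I)) =O[cocompact ℝ] fun t : ℝ => |t| ^ m) :
    Integrable (fun t : ℝ => ‖f (σ₀ + t * I)‖ ^ (2 * 1) / ‖(σ₀ : ℂ) + t * I‖ ^ (2 * α + 1)) := by
  set q : ℝ := 2 * m - (2 * α + 1) with hqdef
  have hq : q < -1 := by simp only [hqdef]; linarith
  have hmap : ∀ t : ℝ, ((σ₀ : ℂ) + t * I) ∈ {s : ℂ | 0 < s.re} := by
    intro t; simp [hσ₀]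
  have hre : ∀ t : ℝ, ((σ₀ : ℂ) + t * I).re = σ₀ := by intro t; simp
  have him : ∀ t : ℝ, ((σ₀ : ℂ) + t * I).im = t := by intro t; simp
  have hcontF : Continuous fun t : ℝ => f ((σ₀ : ℂ) + t * I) :=
    hf.continuousOn.comp_continuous (by continuity) hmap
  have hlb : ∀ t : ℝ, |t| ≤ ‖(σ₀ : ℂ) + t * I‖ := by
    intro t
    have := Complex.abs_im_le_norm ((σ₀ : ℂ) + t * I)
    rwa [him t] at this
  have hpos : ∀ t : ℝ, 0 < ‖(σ₀ : ℂ) + t * I‖ := by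
    intro t
    have := Complex.abs_re_le_norm ((σ₀ : ℂ) + t * I)
    rw [hre t] at this
    exact lt_of_lt_of_le hσ₀ ((le_abs_self σ₀).trans this)
  have hcont : Continuous fun t : ℝ =>
      ‖f (σ₀ + t * I)‖ ^ (2 * 1) / ‖(σ₀ : ℂ) + t * I‖ ^ (2 * α + 1) := by
    refine (hcontF.norm.pow _).div ?_ (fun t => ?_)
    · exact Continuous.rpow_const (by continuity) (fun t => Or.inl (ne_of_gt (hpos t)))
    · exact ne_of_gt (Real.rpow_pos_of_pos (hpos t) _)
  refine hcont.locallyIntegrable.integrable_of_isBigO_cocompact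
    (g := fun t : ℝ => |t| ^ q) ?_ (abs_rpow_intAtFilter hq)
  obtain ⟨C, hC⟩ := hO.bound
  have hev : ∀ᶠ t : ℝ in cocompact ℝ, 1 ≤ |t| := by
    refine mem_cocompact.mpr ⟨Icc (-1) 1, isCompact_Icc, fun x hx => ?_⟩
    rw [mem_compl_iff, mem_Icc, not_and_or, not_le, not_le] at hx
    show (1 : ℝ) ≤ |x|
    rcases hx with h | h
    · rw [abs_of_neg (by linarith)]; linarith
    · rw [abs_of_pos (by linarith)]; linarith
  refine IsBigO.of_bound (|C| ^ 2) ?_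
  filter_upwards [hC, hev] with t h1 h2
  have habs : (0 : ℝ) < |t| := lt_of_lt_of_le one_pos h2
  have hnum : ‖f (σ₀ + t * I)‖ ^ (2 * 1) ≤ (|C| * |t| ^ m) ^ 2 := by
    have h1' : ‖f (σ₀ + t * I)‖ ≤ |C| * |t| ^ m := by
      refine h1.trans ?_
      rw [Real.norm_of_nonneg (Real.rpow_nonneg (abs_nonneg t) m)]
      exact mul_le_mul_of_nonneg_right (le_abs_self C) (Real.rpow_nonneg (abs_nonneg t) m)
    calc ‖f (σ₀ + t * I)‖ ^ (2 * 1) = ‖f (σ₀ + t * I)‖ ^ 2 := by norm_num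
      _ ≤ (|C| * |t| ^ m) ^ 2 := pow_le_pow_left₀ (norm_nonneg _) h1' 2
  have hden : |t| ^ (2 * α + 1) ≤ ‖(σ₀ : ℂ) + t * I‖ ^ (2 * α + 1) :=
    Real.rpow_le_rpow (abs_nonneg t) (hlb t) (by linarith)
  have hdenpos : (0 : ℝ) < |t| ^ (2 * α + 1) := Real.rpow_pos_of_pos habs _
  have key : ‖f (σ₀ + t * I)‖ ^ (2 * 1) / ‖(σ₀ : ℂ) + t * I‖ ^ (2 * α + 1)
      ≤ (|C| * |t| ^ m) ^ 2 / |t| ^ (2 * α + 1) :=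
    div_le_div₀ (sq_nonneg _) hnum hdenpos hden
  have hrw : (|C| * |t| ^ m) ^ 2 / |t| ^ (2 * α + 1) = |C| ^ 2 * |t| ^ q := by
    rw [mul_pow, hqdef, Real.rpow_sub habs, mul_div_assoc]
    congr 1
    rw [← Real.rpow_natCast (|t| ^ m) 2, ← Real.rpow_mul (abs_nonneg t)]
    norm_num [mul_comm]
  rw [Real.norm_of_nonneg (div_nonneg (pow_nonneg (norm_nonneg _) _)
      (Real.rpow_nonneg (norm_nonneg _) _)),
    Real.norm_of_nonneg (Real.rpow_nonneg (abs_nonneg t) q)]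
  calc _ ≤ (|C| * |t| ^ m) ^ 2 / |t| ^ (2 * α + 1) := key
    _ = |C| ^ 2 * |t| ^ q := hrw

/-- The abscissa `σ_k(α)`: infimum of `σ ≥ 0` such that
`∫_ℝ |f(σ+it)|^{2k} |σ+it|^{-(2α+1)} dt < ∞`. -/
def sigmaK (f : ℂ → ℂ) (k : ℕ) (α : ℝ) : ℝ :=
  sInf {σ : ℝ | 0 ≤ σ ∧
    Integrable (fun t : ℝ => ‖f (σ + t * I)‖ ^ (2 * k) / ‖(σ : ℂ) + t * I‖ ^ (2 * α + 1))}

theorem strict_inequality_of_nonlinear_order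
    (f : ℂ → ℂ) (c : ℕ → ℂ) (mu : ℝ → ℝ) (σL : ℝ)
    (hf : DifferentiableOn ℂ f {s : ℂ | 0 < s.re})
    (hconv : ∀ s : ℂ, 0 < s.re →
      Tendsto (fun N : ℕ => ∑ n ∈ Finset.range N, c (n + 1) * (n + 1 : ℂ) ^ (-s))
        atTop (𝓝 (f s)))
    (hdiv : ∀ s : ℂ, s.re < 0 → ¬ ∃ L : ℂ,
      Tendsto (fun N : ℕ => ∑ n ∈ Finset.range N, c (n + 1) * (n + 1 : ℂ) ^ (-s))
        atTop (𝓝 L))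
    (habs : ∀ s : ℂ, 1 < s.re → Summable fun n : ℕ => ‖c (n + 1) * (n + 1 : ℂ) ^ (-s)‖)
    (hnabs : ∀ s : ℂ, s.re < 1 → ¬ Summable fun n : ℕ => ‖c (n + 1) * (n + 1 : ℂ) ^ (-s)‖)
    (hmu : ∀ σ : ℝ, 0 < σ → mu σ =
      sInf {m : ℝ | 0 ≤ m ∧ (fun t : ℝ => f (σ + t * I)) =O[cocompact ℝ] fun t : ℝ => |t| ^ m})
    (hmu0 : Tendsto mu (𝓝[>] (0 : ℝ)) (𝓝 (mu 0)))
    (hσL : σL = sInf {σ : ℝ | 0 ≤ σ ∧ mu σ = 0})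
    (hσLpos : 0 < σL) (hmu0pos : 0 < mu 0)
    (σ₀ : ℝ) (hσ₀pos : 0 < σ₀) (hσ₀lt : σ₀ < σL)
    (hstrict : mu σ₀ < mu 0 * (1 - σ₀ / σL)) :
    ∃ k : ℕ, 1 ≤ k ∧ ∃ α : ℝ, 0 < α ∧ α ≤ (k : ℝ) * mu 0 ∧
      sigmaK f k α < σL * (1 - α / ((k : ℝ) * mu 0)) := by
  have hfrac : σ₀ / σL < 1 := (div_lt_one hσLpos).mpr hσ₀lt
  have hfracpos : 0 < σ₀ / σL := div_pos hσ₀pos hσLpos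
  set B : ℝ := mu 0 * (1 - σ₀ / σL) with hBdef
  have hBpos : 0 < B := mul_pos hmu0pos (by linarith)
  have hBle : B ≤ mu 0 := by
    rw [hBdef]; nlinarith
  have hmuσ₀ : mu σ₀ = sInf {m : ℝ | 0 ≤ m ∧
      (fun t : ℝ => f (σ₀ + t * I)) =O[cocompact ℝ] fun t : ℝ => |t| ^ m} := hmu σ₀ hσ₀pos
  set S := {m : ℝ | 0 ≤ m ∧
      (fun t : ℝ => f (σ₀ + t * I)) =O[cocompact ℝ] fun t : ℝ => |t| ^ m} with hSdef
  have hSne : S.Nonempty := by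
    by_contra hne
    rw [not_nonempty_iff_eq_empty] at hne
    have h0 : mu σ₀ = 0 := by rw [hmuσ₀, hne, Real.sInf_empty]
    have hle : σL ≤ σ₀ := by
      rw [hσL]
      exact csInf_le ⟨0, fun x hx => hx.1⟩ ⟨le_of_lt hσ₀pos, h0⟩
    linarith
  have hbdd : BddBelow S := ⟨0, fun x hx => hx.1⟩
  have hlt : sInf S < B := by rw [← hmuσ₀]; exact hstrict
  obtain ⟨m, hmS, hmB⟩ := (csInf_lt_iff hbdd hSne).mp hlt
  obtain ⟨hm0, hmO⟩ := hmS
  set α : ℝ := (m + B) / 2 with hαdef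
  have hmα : m < α := by rw [hαdef]; linarith
  have hαB : α < B := by rw [hαdef]; linarith
  have hαpos : 0 < α := by rw [hαdef]; linarith
  refine ⟨1, le_refl 1, α, hαpos, ?_, ?_⟩
  · push_cast; rw [one_mul]; linarith
  · have hint := key_integrable f σ₀ m α hσ₀pos hm0 hmα hf hmO
    have h1 : sigmaK f 1 α ≤ σ₀ := by
      refine csInf_le ⟨0, fun x hx => hx.1⟩ ?_
      exact ⟨le_of_lt hσ₀pos, hint⟩
    have hα' : α / mu 0 < 1 - σ₀ / σL := by
      rw [div_lt_iff₀ hmu0pos]; rw [hBdef] at hαB; linarith [hαB]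
    have h2 : σ₀ < σL * (1 - α / mu 0) := by
      have : σ₀ / σL < 1 - α / mu 0 := by linarith
      calc σ₀ = σL * (σ₀ / σL) := by field_simp
        _ < σL * (1 - α / mu 0) := by exact mul_lt_mul_of_pos_left this hσLpos
    push_cast
    rw [one_mul]
    linarith
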